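/- Define, for real α ≥ 0 and β ∈ ℂ, D(α, β) := min{ 2|β|, √2·|α − β|, √2·|α + β|, √2·|α − iβ|, √2·|α + iβ|, 2α }, and let F be the set of pairs (α, β) with α ∈ ℝ, α ≥ 0, β ∈ ℂ, satisfying |α + β| ≤ 1, |α − β| ≤ 1, −π/4 ≤ arg(α + β) ≤ 0, and 0 ≤ arg(α − β) ≤ π/4. Then 2·sin(π/8) is the greatest element of { D(α, β) : (α, β) ∈ F }; in particular D(α, β) ≤ 2·sin(π/8) for all (α, β) ∈ F, with equality at α = cos(π/8), β = −i·sin(π/8). -/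

import Mathlib

open Real Complex

/-- The minimum pairwise Euclidean distance of the 8-point composite constellation. -/
noncomputable def Dmin (α : ℝ) (β : ℂ) : ℝ :=
  min (min (min (2 * ‖β‖) (Real.sqrt 2 * ‖((α : ℝ) - β)‖))
        (min (Real.sqrt 2 * ‖((α : ℝ) + β)‖)
          (Real.sqrt 2 * ‖((α : ℝ) - Complex.I * β)‖)))
      (min (Real.sqrt 2 * ‖((α : ℝ) + Complex.I * β)‖) (2 * α))

/-- The feasible set of problem P1′ when the direct link is absent. -/
def Feas (α : ℝ) (β : ℂ) : Prop :=
  0 ≤ α ∧ ‖((α : ℝ) + β)‖ ≤ 1 ∧ ‖((α : ℝ) - β)‖ ≤ 1 ∧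
    -(π / 4) ≤ Complex.arg ((α : ℝ) + β) ∧ Complex.arg ((α : ℝ) + β) ≤ 0 ∧
    0 ≤ Complex.arg ((α : ℝ) - β) ∧ Complex.arg ((α : ℝ) - β) ≤ π / 4

section RealLemmas

theorem myCaseB (t b d : ℝ) (hb : 0 ≤ b) (hd : 1/8 ≤ d) (ht : b + d ≤ t)
    (c1 : (t+d)^2 + b^2 ≤ 1)
    (g2 : (29:ℝ)/100 ≤ (t-d)^2 + b^2) (g4 : (29:ℝ)/100 ≤ (t-b)^2 + d^2)
    (g6 : (146:ℝ)/1000 ≤ t^2) (g1 : (146:ℝ)/1000 ≤ b^2 + d^2) : False := by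
  have f1 : (0:ℝ) ≤ b := hb
  have f2 : (0:ℝ) ≤ d - 1/8 := by linarith
  have f3 : (0:ℝ) ≤ t - b - d := by linarith
  have f4 : (0:ℝ) ≤ 1 - ((t+d)^2 + b^2) := by linarith
  have f5 : (0:ℝ) ≤ (t-d)^2 + b^2 - 29/100 := by linarith
  have f6 : (0:ℝ) ≤ (t-b)^2 + d^2 - 29/100 := by linarith
  have f7 : (0:ℝ) ≤ t^2 - 146/1000 := by linarith
  have f8 : (0:ℝ) ≤ b^2 + d^2 - 146/1000 := by linarith
  nlinarith [mul_nonneg f1 f2, mul_nonneg f1 f3, mul_nonneg f1 f4, mul_nonneg f1 f6,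
    mul_nonneg f1 f8, mul_nonneg f2 f3, mul_nonneg f2 f4, mul_nonneg f2 f5,
    mul_nonneg f2 f6, mul_nonneg f2 f7, mul_nonneg f2 f8, mul_nonneg f3 f4,
    mul_nonneg f3 f6, mul_nonneg f3 f8, f4, f5, f6, f8]


set_option maxHeartbeats 1000000 in
theorem myH (p q d : ℝ)
    (hp1 : (153:ℝ)/200 ≤ p) (hp2 : p ≤ 4/5) (hq1 : (9:ℝ)/5 ≤ q) (hq2 : q ≤ 13/7)
    (hpq : p^2 + q^2 = 4) (hd : 0 ≤ d) (hd8 : d ≤ 1/8) :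
    0 < 128*d^3 - 64*p*d^2 - 32*p*q*d - 32*p*q*d^3 + 16*p^2*d - 16*p^2*d^3
      + 16*p^2*q + 16*p^2*q*d^2 - 32*p^3 + 16*p^3*d^2 + 16*p^3*q*d - 8*p^4*d + 8*p^5 := by
  have hp0 : (0:ℝ) < p := by linarith
  have h0 : (97:ℝ)/100 ≤ 2*q - 4*p + p^3 := by
    nlinarith [sq_nonneg (p - 153/200), sq_nonneg (p - 4/5), mul_pos hp0 hp0,
      mul_nonneg (mul_nonneg hp0.le hp0.le) hp0.le, sq_nonneg (p*q)]
  have hd2 : d^2 ≤ (1/8)*d := by nlinarith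
  have hd3 : d^3 ≤ (1/64)*d := by nlinarith [mul_nonneg hd hd]
  have hmain : 8*p^2*(97/100) ≤ 8*p^2*(2*q - 4*p + p^3) :=
    mul_le_mul_of_nonneg_left h0 (by positivity)
  have hp2lo : (153:ℝ)/200*(153/200) ≤ p^2 := by nlinarith
  -- linear-in-d negative parts bounds
  have e1 : p*d^2 ≤ (4/5)*((1/8)*d) := by nlinarith [mul_le_mul_of_nonneg_left hd2 hp0.le]
  have hpql : p*q ≤ (4/5)*(13/7) := by
    nlinarith [mul_le_mul hp2 hq2 (by linarith : (0:ℝ) ≤ q) (by norm_num : (0:ℝ) ≤ 4/5)]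
  have e2 : p*q*d ≤ (4/5)*(13/7)*d := by nlinarith [mul_le_mul_of_nonneg_right hpql hd]
  have e3 : 16*(153/200)^2*d ≤ 16*p^2*d := by nlinarith [mul_le_mul_of_nonneg_right hp2lo hd]
  have e4 : 16*((153/200)^2*(153/200))*((9:ℝ)/5)*d ≤ 16*p^3*q*d := by
    have h1 : (153/200)^2*(153/200) ≤ p^3 := by nlinarith [mul_le_mul_of_nonneg_right hp2lo hp0.le, mul_le_mul_of_nonneg_left hp1 (by positivity : (0:ℝ) ≤ (153/200)^2)]
    have h2 : ((153:ℝ)/200)^2*(153/200)*((9:ℝ)/5) ≤ p^3*q := by nlinarith [mul_le_mul h1 hq1 (by norm_num) (by positivity : (0:ℝ) ≤ p^3)]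
    nlinarith [mul_le_mul_of_nonneg_right h2 hd]
  have e5 : p^4*d ≤ (4/5)^4*d := by
    have : p^4 ≤ (4/5)^4 := by nlinarith [sq_nonneg p, sq_nonneg (p^2)]
    nlinarith [mul_le_mul_of_nonneg_right this hd]
  have e6 : p*q*d^3 ≤ (4/5)*(13/7)*((1/64)*d) := by
    have hpq0 : 0 ≤ p*q := by positivity
    nlinarith [mul_le_mul_of_nonneg_left hd3 hpq0, mul_le_mul_of_nonneg_right (mul_le_mul hp2 hq2 (by linarith) (by linarith : (0:ℝ) ≤ 4/5)) hd]
  have e7 : p^2*d^3 ≤ (4/5)^2*((1/64)*d) := by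
    nlinarith [mul_le_mul_of_nonneg_left hd3 (sq_nonneg p), mul_le_mul_of_nonneg_right (by nlinarith : p^2 ≤ (4/5)^2) (by nlinarith [mul_nonneg hd hd] : (0:ℝ) ≤ d^3)]
  nlinarith [hmain, e1, e2, e3, e4, e5, e6, e7, mul_nonneg (mul_nonneg hd hd) hd,
    mul_nonneg (mul_nonneg (sq_nonneg p) (by linarith : (0:ℝ) ≤ q)) (sq_nonneg d),
    mul_nonneg (mul_nonneg (mul_nonneg hp0.le hp0.le) hp0.le) (sq_nonneg d), hp2lo]


set_option maxHeartbeats 1000000 in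
theorem myCaseA (p q t b d : ℝ)
    (hp1 : (153:ℝ)/200 ≤ p) (hp2 : p ≤ 4/5) (hq1 : (9:ℝ)/5 ≤ q) (hq2 : q ≤ 13/7)
    (hpq : p^2 + q^2 = 4) (hqp : (q-p)^2 = 2*p^2)
    (hb : 0 ≤ b) (hd : 0 ≤ d) (hd8 : d ≤ 1/8) (ht : b + d ≤ t)
    (c1 : (t+d)^2 + b^2 ≤ 1)
    (g1 : p^2 < 4*(b^2+d^2)) (g4 : p^2 < 2*((t-b)^2+d^2)) : False := by
  have hp0 : (0:ℝ) < p := by linarith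
  have hqp0 : (0:ℝ) < q - p := by linarith
  have hpd : (0:ℝ) < p^2 - 4*d^2 := by nlinarith
  have hqpd : (0:ℝ) < (q-p)^2 - 4*d^2 := by nlinarith
  have htb : 0 ≤ t - b := by linarith
  have s1 : p^2 - 4*d^2 < 2*b*p := by
    have h4 : (p^2-4*d^2)*p^2 < 4*b^2*p^2 := by nlinarith
    nlinarith [mul_nonneg hb hp0.le, sq_nonneg (2*b*p + p^2 - 4*d^2)]
  have s2 : (q-p)^2 - 4*d^2 < 2*(t-b)*(q-p) := by
    have h4 : ((q-p)^2-4*d^2)*(q-p)^2 < 4*(t-b)^2*(q-p)^2 := by nlinarith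
    nlinarith [mul_nonneg htb hqp0.le, sq_nonneg (2*(t-b)*(q-p) + (q-p)^2 - 4*d^2)]
  obtain ⟨W, hWdef⟩ : ∃ W : ℝ, W = (q-p)*(p^2-4*d^2) + p*((q-p)^2-4*d^2) + 2*p*(q-p)*d :=
    ⟨_, rfl⟩
  have hW0 : 0 < W := by
    rw [hWdef]
    have h1 := mul_pos hqp0 hpd
    have h2 := mul_pos hp0 hqpd
    have h3 := mul_nonneg (mul_nonneg (by linarith : (0:ℝ) ≤ 2*p) hqp0.le) hd
    nlinarith
  have hW : W < 2*p*(q-p)*(t+d) := by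
    rw [hWdef]
    nlinarith [mul_lt_mul_of_pos_left s1 hqp0, mul_lt_mul_of_pos_left s2 hp0]
  have hsq1 : W^2 < (2*p*(q-p))^2 * (t+d)^2 := by
    calc W^2 < (2*p*(q-p)*(t+d))^2 := by
          exact pow_lt_pow_left₀ hW hW0.le (by norm_num)
      _ = (2*p*(q-p))^2 * (t+d)^2 := by ring
  have hsq2 : (q-p)^2*(p^2-4*d^2)^2 ≤ (2*p*(q-p))^2 * b^2 := by
    have h2 : (p^2-4*d^2)^2 ≤ (2*b*p)^2 := by
      exact pow_le_pow_left₀ hpd.le s1.le 2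
    calc (q-p)^2*(p^2-4*d^2)^2 ≤ (q-p)^2*(2*b*p)^2 := by
          exact mul_le_mul_of_nonneg_left h2 (sq_nonneg _)
      _ = (2*p*(q-p))^2 * b^2 := by ring
  have hfin : W^2 + (q-p)^2*(p^2-4*d^2)^2 < 4*p^2*(q-p)^2 := by
    have hc : (2*p*(q-p))^2 * ((t+d)^2 + b^2) ≤ (2*p*(q-p))^2 * 1 :=
      mul_le_mul_of_nonneg_left c1 (sq_nonneg _)
    nlinarith [hsq1, hsq2, hc]
  have hH := myH p q d hp1 hp2 hq1 hq2 hpq hd hd8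
  have hG : W^2 + (q-p)^2*(p^2-4*d^2)^2 - 4*p^2*(q-p)^2 =
      d * (128*d^3 - 64*p*d^2 - 32*p*q*d - 32*p*q*d^3 + 16*p^2*d - 16*p^2*d^3
      + 16*p^2*q + 16*p^2*q*d^2 - 32*p^3 + 16*p^3*d^2 + 16*p^3*q*d - 8*p^4*d + 8*p^5) := by
    rw [hWdef]
    linear_combination (32*d^4 - 16*p*d^3 - 8*p*q*d^2 + 4*p^2*d^2 + 4*p^2*q*d + p^2*q^2
      - 8*p^3*d - 2*p^3*q + p^4) * hpq
  linarith [mul_nonneg hd hH.le, hfin, hG.le, hG.ge]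

theorem myCore (p q t b d : ℝ)
    (hp1 : (153:ℝ)/200 ≤ p) (hp2 : p ≤ 4/5) (hq1 : (9:ℝ)/5 ≤ q) (hq2 : q ≤ 13/7)
    (hpq : p^2 + q^2 = 4) (hqp : (q-p)^2 = 2*p^2)
    (hb : 0 ≤ b) (hd : 0 ≤ d) (ht : b + d ≤ t)
    (c1 : (t+d)^2 + b^2 ≤ 1)
    (g1 : p^2 < 4*(b^2+d^2)) (g2 : p^2 < 2*((t-d)^2+b^2))
    (g4 : p^2 < 2*((t-b)^2+d^2)) (g6 : p^2 < 4*t^2) : False := by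
  have hp2lo : (585:ℝ)/1000 ≤ p^2 := by nlinarith
  rcases le_or_gt d (1/8) with h8 | h8
  · exact myCaseA p q t b d hp1 hp2 hq1 hq2 hpq hqp hb hd h8 ht c1 g1 g4
  · exact myCaseB t b d hb h8.le ht c1 (by linarith) (by linarith) (by linarith) (by linarith)

end RealLemmas


theorem r2lo : (1.414:ℝ) < Real.sqrt 2 := by
  nlinarith [Real.sq_sqrt (by norm_num : (0:ℝ) ≤ 2), Real.sqrt_nonneg 2]
theorem r2hi : Real.sqrt 2 < 1.4143 := by
  nlinarith [Real.sq_sqrt (by norm_num : (0:ℝ) ≤ 2), Real.sqrt_nonneg 2]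

theorem c8_sq : Real.cos (π/8)^2 = (2 + Real.sqrt 2)/4 := by
  have h := Real.cos_sq (π/8)
  rw [show 2*(π/8) = π/4 by ring, Real.cos_pi_div_four] at h
  rw [h]; ring
theorem s8_sq : Real.sin (π/8)^2 = (2 - Real.sqrt 2)/4 := by
  rw [Real.sin_sq, c8_sq]; ring
theorem sc8 : 2*Real.sin (π/8)*Real.cos (π/8) = Real.sqrt 2/2 := by
  have h := Real.sin_two_mul (π/8)
  rw [show 2*(π/8) = π/4 by ring, Real.sin_pi_div_four] at h
  linarith
theorem s8_pos : 0 < Real.sin (π/8) :=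
  Real.sin_pos_of_pos_of_lt_pi (by positivity) (by linarith [Real.pi_pos])
theorem c8_pos : 0 < Real.cos (π/8) :=
  Real.cos_pos_of_mem_Ioo ⟨by linarith [Real.pi_pos], by linarith [Real.pi_pos]⟩
theorem p_lo : (153:ℝ)/200 ≤ 2*Real.sin (π/8) := by
  nlinarith [s8_sq, r2hi, s8_pos]
theorem p_hi : 2*Real.sin (π/8) ≤ 4/5 := by
  nlinarith [s8_sq, r2lo, s8_pos]
theorem q_lo : (9:ℝ)/5 ≤ 2*Real.cos (π/8) := by
  nlinarith [c8_sq, r2lo, c8_pos]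
theorem q_hi : 2*Real.cos (π/8) ≤ 13/7 := by
  nlinarith [c8_sq, r2hi, c8_pos]
theorem pq4 : (2*Real.sin (π/8))^2 + (2*Real.cos (π/8))^2 = 4 := by
  nlinarith [Real.sin_sq_add_cos_sq (π/8)]
theorem qp2 : (2*Real.cos (π/8) - 2*Real.sin (π/8))^2 = 2*(2*Real.sin (π/8))^2 := by
  nlinarith [sc8, s8_sq, c8_sq]
theorem c8_ge_s8 : Real.sin (π/8) ≤ Real.cos (π/8) := by
  nlinarith [s8_sq, c8_sq, s8_pos, c8_pos, r2lo]
theorem key8 : Real.sqrt 2 * (Real.cos (π/8) - Real.sin (π/8)) = 2*Real.sin (π/8) := by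
  have h1 : 0 ≤ Real.sqrt 2 * (Real.cos (π/8) - Real.sin (π/8)) :=
    mul_nonneg (Real.sqrt_nonneg 2) (by linarith [c8_ge_s8])
  have h2 : (0:ℝ) ≤ 2*Real.sin (π/8) := by linarith [s8_pos]
  have hsq : (Real.sqrt 2 * (Real.cos (π/8) - Real.sin (π/8)))^2 = (2*Real.sin (π/8))^2 := by
    have h := Real.sq_sqrt (by norm_num : (0:ℝ) ≤ 2)
    nlinarith [sc8, s8_sq, c8_sq]
  calc Real.sqrt 2 * (Real.cos (π/8) - Real.sin (π/8))
      = Real.sqrt ((Real.sqrt 2 * (Real.cos (π/8) - Real.sin (π/8)))^2) := (Real.sqrt_sq h1).symm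
    _ = Real.sqrt ((2*Real.sin (π/8))^2) := by rw [hsq]
    _ = 2*Real.sin (π/8) := Real.sqrt_sq h2

/-- nonnegative combination of re,im from an arg-range condition -/
theorem arg_comb_w (z : ℂ) (h1 : -(π/4) ≤ Complex.arg z) (h2 : Complex.arg z ≤ 0) :
    0 ≤ z.re + z.im := by
  by_cases hz : z = 0
  · simp [hz]
  · have habs : 0 < ‖z‖ := norm_pos_iff.mpr hz
    have hs : 0 ≤ Real.sin (Complex.arg z + π/4) :=
      Real.sin_nonneg_of_nonneg_of_le_pi (by linarith) (by linarith [Real.pi_pos])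
    rw [Real.sin_add, Real.sin_pi_div_four, Real.cos_pi_div_four] at hs
    have h2' : (0:ℝ) < Real.sqrt 2 := by positivity
    have hsum : 0 ≤ Real.sin (Complex.arg z) + Real.cos (Complex.arg z) := by nlinarith
    rw [Complex.sin_arg, Complex.cos_arg hz] at hsum
    by_contra hneg
    push_neg at hneg
    have : z.im / ‖z‖ + z.re / ‖z‖ < 0 := by
      rw [← add_div]
      exact div_neg_of_neg_of_pos (by linarith) habs
    linarith
theorem arg_comb_v (z : ℂ) (h1 : 0 ≤ Complex.arg z) (h2 : Complex.arg z ≤ π/4) :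
    0 ≤ z.re - z.im := by
  by_cases hz : z = 0
  · simp [hz]
  · have habs : 0 < ‖z‖ := norm_pos_iff.mpr hz
    have hs : 0 ≤ Real.sin (π/4 - Complex.arg z) :=
      Real.sin_nonneg_of_nonneg_of_le_pi (by linarith) (by linarith [Real.pi_pos])
    rw [Real.sin_sub, Real.sin_pi_div_four, Real.cos_pi_div_four] at hs
    have h2' : (0:ℝ) < Real.sqrt 2 := by positivity
    have hsum : 0 ≤ Real.cos (Complex.arg z) - Real.sin (Complex.arg z) := by nlinarith
    rw [Complex.sin_arg, Complex.cos_arg hz] at hsum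
    by_contra hneg
    push_neg at hneg
    have : z.re / ‖z‖ - z.im / ‖z‖ < 0 := by
      rw [div_sub_div_same]
      exact div_neg_of_neg_of_pos (by linarith) habs
    linarith

theorem abs_sq_le (z : ℂ) (h : ‖z‖ ≤ 1) : z.re^2 + z.im^2 ≤ 1 := by
  have h1 : (‖z‖)^2 = z.re^2 + z.im^2 := by
    rw [Complex.sq_norm, Complex.normSq_apply]; ring
  nlinarith [norm_nonneg z]

theorem sq_lt_of_lt2 (m : ℝ) (z : ℂ) (hm : 0 ≤ m) (h : m < 2 * ‖z‖) :
    m^2 < 4*(z.re^2 + z.im^2) := by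
  have h1 : (‖z‖)^2 = z.re^2 + z.im^2 := by
    rw [Complex.sq_norm, Complex.normSq_apply]; ring
  nlinarith [norm_nonneg z]

theorem sq_lt_of_ltr2 (m : ℝ) (z : ℂ) (hm : 0 ≤ m) (h : m < Real.sqrt 2 * ‖z‖) :
    m^2 < 2*(z.re^2 + z.im^2) := by
  have h1 : (‖z‖)^2 = z.re^2 + z.im^2 := by
    rw [Complex.sq_norm, Complex.normSq_apply]; ring
  nlinarith [norm_nonneg z, Real.sq_sqrt (by norm_num : (0:ℝ) ≤ 2), Real.sqrt_nonneg 2]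

set_option maxHeartbeats 800000 in
theorem myUB (α : ℝ) (β : ℂ) (h : Feas α β) : Dmin α β ≤ 2 * Real.sin (π/8) := by
  obtain ⟨ht0, hw1, hv1, ha1, ha2, ha3, ha4⟩ := h
  by_contra hcon
  push_neg at hcon
  unfold Dmin at hcon
  simp only [lt_min_iff] at hcon
  obtain ⟨⟨⟨A1, A2⟩, A3, A4⟩, A5, A6⟩ := hcon
  have hp0 : (0:ℝ) < 2 * Real.sin (π/8) := by linarith [s8_pos]
  -- real coordinate facts
  have hwre : ((α:ℂ) + β).re = α + β.re := by simp
  have hwim : ((α:ℂ) + β).im = β.im := by simp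
  have hvre : ((α:ℂ) - β).re = α - β.re := by simp
  have hvim : ((α:ℂ) - β).im = -β.im := by simp
  have f1 : 0 ≤ (α + β.re) + β.im := by
    have := arg_comb_w ((α:ℂ) + β) ha1 ha2
    rwa [hwre, hwim] at this
  have f2 : 0 ≤ (α - β.re) - (-β.im) := by
    have := arg_comb_v ((α:ℂ) - β) ha3 ha4
    rwa [hvre, hvim] at this
  have f3 : 0 ≤ -β.im := by
    have := Complex.arg_nonneg_iff.mp ha3
    rwa [hvim] at this
  have f4 : (α + β.re)^2 + β.im^2 ≤ 1 := by
    have := abs_sq_le _ hw1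
    rwa [hwre, hwim] at this
  have f5 : (α - β.re)^2 + β.im^2 ≤ 1 := by
    have := abs_sq_le _ hv1
    have e : (-β.im)^2 = β.im^2 := by ring
    rw [hvre, hvim, e] at this
    exact this
  -- squared strict inequalities
  have sqA1 : (2*Real.sin (π/8))^2 < 4*(β.re^2 + β.im^2) := sq_lt_of_lt2 _ _ hp0.le A1
  have sqA2 : (2*Real.sin (π/8))^2 < 2*((α - β.re)^2 + β.im^2) := by
    have h1 := sq_lt_of_ltr2 _ _ hp0.le A2
    rw [hvre, hvim] at h1
    linarith [h1, neg_sq β.im]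
  have sqA3 : (2*Real.sin (π/8))^2 < 2*((α + β.re)^2 + β.im^2) := by
    have h1 := sq_lt_of_ltr2 _ _ hp0.le A3
    rwa [hwre, hwim] at h1
  have hure : ((α:ℂ) - Complex.I * β).re = α + β.im := by simp
  have huim : ((α:ℂ) - Complex.I * β).im = -β.re := by simp
  have sqA4 : (2*Real.sin (π/8))^2 < 2*((α + β.im)^2 + β.re^2) := by
    have h1 := sq_lt_of_ltr2 _ _ hp0.le A4
    rw [hure, huim] at h1
    linarith [h1, neg_sq β.re]
  have sqA6 : (2*Real.sin (π/8))^2 < 4*α^2 := by nlinarith [A6, hp0]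
  -- apply the core lemma with b := -β.im
  rcases le_total 0 β.re with hd0 | hd0
  · exact myCore (2*Real.sin (π/8)) (2*Real.cos (π/8)) α (-β.im) β.re
      p_lo p_hi q_lo q_hi pq4 qp2 f3 hd0 (by linarith)
      (by linarith [f4, neg_sq β.im]) (by linarith [sqA1, neg_sq β.im])
      (by linarith [sqA2, neg_sq β.im]) (by linarith [sqA4, neg_sq β.im, neg_sq β.re]) sqA6
  · exact myCore (2*Real.sin (π/8)) (2*Real.cos (π/8)) α (-β.im) (-β.re)
      p_lo p_hi q_lo q_hi pq4 qp2 f3 (by linarith) (by linarith)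
      (by linarith [f5, neg_sq β.im, neg_sq β.re]) (by linarith [sqA1, neg_sq β.im, neg_sq β.re])
      (by linarith [sqA3, neg_sq β.re, neg_sq β.im]) (by linarith [sqA4, neg_sq β.im, neg_sq β.re]) sqA6

theorem eabs1 : ‖-Complex.I * ((Real.sin (π/8) : ℝ) : ℂ)‖ = Real.sin (π/8) := by
  rw [show (-Complex.I * ((Real.sin (π/8) : ℝ) : ℂ)) =
      ((0:ℝ):ℂ) + ((-Real.sin (π/8) : ℝ) : ℂ) * Complex.I by push_cast; ring,
    Complex.norm_add_mul_I]
  rw [show ((0:ℝ)^2 + (-Real.sin (π/8))^2) = (Real.sin (π/8))^2 by ring]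
  exact Real.sqrt_sq s8_pos.le

theorem eabs2 : ‖((Real.cos (π/8) : ℝ) : ℂ) - (-Complex.I * ((Real.sin (π/8) : ℝ) : ℂ))‖ = 1 := by
  rw [show (((Real.cos (π/8) : ℝ) : ℂ) - (-Complex.I * ((Real.sin (π/8) : ℝ) : ℂ))) =
      ((Real.cos (π/8):ℝ):ℂ) + ((Real.sin (π/8) : ℝ) : ℂ) * Complex.I by push_cast; ring,
    Complex.norm_add_mul_I, show Real.cos (π/8)^2 + Real.sin (π/8)^2 = 1 from by
      rw [← Real.sin_sq_add_cos_sq (π/8)]; ring]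
  exact Real.sqrt_one

theorem eabs3 : ‖((Real.cos (π/8) : ℝ) : ℂ) + (-Complex.I * ((Real.sin (π/8) : ℝ) : ℂ))‖ = 1 := by
  rw [show (((Real.cos (π/8) : ℝ) : ℂ) + (-Complex.I * ((Real.sin (π/8) : ℝ) : ℂ))) =
      ((Real.cos (π/8):ℝ):ℂ) + ((-Real.sin (π/8) : ℝ) : ℂ) * Complex.I by push_cast; ring,
    Complex.norm_add_mul_I, show Real.cos (π/8)^2 + (-Real.sin (π/8))^2 = 1 from by
      rw [show (-Real.sin (π/8))^2 = Real.sin (π/8)^2 by ring, ← Real.sin_sq_add_cos_sq (π/8)]; ring]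
  exact Real.sqrt_one

theorem eabs4 : ‖((Real.cos (π/8) : ℝ) : ℂ) - Complex.I * (-Complex.I * ((Real.sin (π/8) : ℝ) : ℂ))‖ = Real.cos (π/8) - Real.sin (π/8) := by
  have e : (((Real.cos (π/8) : ℝ) : ℂ) - Complex.I * (-Complex.I * ((Real.sin (π/8) : ℝ) : ℂ))) =
      ((Real.cos (π/8) - Real.sin (π/8) : ℝ) : ℂ) := by
    push_cast
    ring_nf
    rw [Complex.I_sq]
    ring
  rw [e, Complex.norm_real, Real.norm_eq_abs, _root_.abs_of_nonneg (by linarith [c8_ge_s8])]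

theorem eabs5 : ‖((Real.cos (π/8) : ℝ) : ℂ) + Complex.I * (-Complex.I * ((Real.sin (π/8) : ℝ) : ℂ))‖ = Real.cos (π/8) + Real.sin (π/8) := by
  have e : (((Real.cos (π/8) : ℝ) : ℂ) + Complex.I * (-Complex.I * ((Real.sin (π/8) : ℝ) : ℂ))) =
      ((Real.cos (π/8) + Real.sin (π/8) : ℝ) : ℂ) := by
    push_cast
    ring_nf
    rw [Complex.I_sq]
    ring
  rw [e, Complex.norm_real, Real.norm_eq_abs, _root_.abs_of_nonneg (by linarith [c8_ge_s8, s8_pos, c8_pos])]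

theorem myVal : Dmin (Real.cos (π / 8)) (-Complex.I * ((Real.sin (π / 8) : ℝ) : ℂ)) =
    2 * Real.sin (π / 8) := by
  unfold Dmin
  rw [eabs1, eabs2, eabs3, eabs4, eabs5, key8, mul_one]
  have l1 : 2 * Real.sin (π/8) ≤ Real.sqrt 2 := by
    rw [← key8]
    nlinarith [mul_le_mul_of_nonneg_left
      (show Real.cos (π/8) - Real.sin (π/8) ≤ 1 by
        linarith [Real.cos_le_one (π/8), s8_pos]) (Real.sqrt_nonneg 2)]
  have l2 : 2 * Real.sin (π/8) ≤ Real.sqrt 2 * (Real.cos (π/8) + Real.sin (π/8)) := by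
    rw [← key8]
    nlinarith [Real.sqrt_nonneg 2, s8_pos]
  have l3 : 2 * Real.sin (π/8) ≤ 2 * Real.cos (π/8) := by linarith [c8_ge_s8]
  rw [min_eq_left l1, min_eq_right l1, min_self, min_eq_left (le_min l2 l3)]

theorem myFeas : Feas (Real.cos (π / 8)) (-Complex.I * ((Real.sin (π / 8) : ℝ) : ℂ)) := by
  have hargw : Complex.arg (((Real.cos (π/8) : ℝ) : ℂ) + (-Complex.I * ((Real.sin (π/8) : ℝ) : ℂ))) = -(π/8) := by
    have e : (((Real.cos (π/8) : ℝ) : ℂ) + (-Complex.I * ((Real.sin (π/8) : ℝ) : ℂ))) =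
        Complex.cos (((-(π/8) : ℝ)) : ℂ) + Complex.sin (((-(π/8) : ℝ)) : ℂ) * Complex.I := by
      rw [← Complex.ofReal_cos, ← Complex.ofReal_sin, Real.cos_neg, Real.sin_neg]; push_cast; ring
    rw [e, Complex.arg_cos_add_sin_mul_I ⟨by linarith [Real.pi_pos], by linarith [Real.pi_pos]⟩]
  have hargv : Complex.arg (((Real.cos (π/8) : ℝ) : ℂ) - (-Complex.I * ((Real.sin (π/8) : ℝ) : ℂ))) = π/8 := by
    have e : (((Real.cos (π/8) : ℝ) : ℂ) - (-Complex.I * ((Real.sin (π/8) : ℝ) : ℂ))) =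
        Complex.cos (((π/8 : ℝ)) : ℂ) + Complex.sin (((π/8 : ℝ)) : ℂ) * Complex.I := by
      rw [← Complex.ofReal_cos, ← Complex.ofReal_sin]; push_cast; ring
    rw [e, Complex.arg_cos_add_sin_mul_I ⟨by linarith [Real.pi_pos], by linarith [Real.pi_pos]⟩]
  refine ⟨c8_pos.le, le_of_eq eabs3, le_of_eq eabs2, ?_, ?_, ?_, ?_⟩
  · rw [hargw]; linarith [Real.pi_pos]
  · rw [hargw]; linarith [Real.pi_pos]
  · rw [hargv]; linarith [Real.pi_pos]
  · rw [hargv]; linarith [Real.pi_pos]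

theorem stmt_14 :
    IsGreatest {d : ℝ | ∃ α : ℝ, ∃ β : ℂ, Feas α β ∧ d = Dmin α β} (2 * Real.sin (π / 8)) ∧
    Dmin (Real.cos (π / 8)) (-Complex.I * ((Real.sin (π / 8) : ℝ) : ℂ)) =
      2 * Real.sin (π / 8) := by
  refine ⟨⟨⟨Real.cos (π / 8), -Complex.I * ((Real.sin (π / 8) : ℝ) : ℂ), myFeas, myVal.symm⟩, ?_⟩, myVal⟩
  rintro x ⟨α, β, hf, rfl⟩
  exact myUB α β hf
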